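/- Let a ∈ (0,1) be such that Λ((0,a]) > 0. Then there exist a constant C₁ ∈ (0,∞) (depending on Λ and a) and an integer b₀ such that for all b ≥ b₀: λ_b^a ≤ λ_b ≤ C₁ λ_b^a. -/

import Mathlib

open MeasureTheory Finset Filter

/-- `lamBK μ b k` is `λ_{b,k} = ∫_{[0,1]} x^{k-2} (1-x)^{b-k} dΛ(x)`. -/
noncomputable def lamBK (μ : Measure ℝ) (b k : ℕ) : ℝ :=
  ∫ x in Set.Icc (0:ℝ) 1, x ^ (k - 2) * (1 - x) ^ (b - k) ∂μ

/-- `lamB μ b` is `λ_b = Σ_{k=2}^b C(b,k) λ_{b,k}`. -/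
noncomputable def lamB (μ : Measure ℝ) (b : ℕ) : ℝ :=
  ∑ k ∈ Finset.Icc 2 b, (b.choose k : ℝ) * lamBK μ b k

/-- `gamB μ b` is `γ_b = Σ_{k=2}^b C(b,k) (k-1) λ_{b,k}`. -/
noncomputable def gamB (μ : Measure ℝ) (b : ℕ) : ℝ :=
  ∑ k ∈ Finset.Icc 2 b, (b.choose k : ℝ) * ((k : ℝ) - 1) * lamBK μ b k

/-- The summed integrand. -/
noncomputable def fB (b : ℕ) (x : ℝ) : ℝ :=
  ∑ k ∈ Finset.Icc 2 b, (b.choose k : ℝ) * (x ^ (k - 2) * (1 - x) ^ (b - k))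

lemma fB_nonneg (b : ℕ) {x : ℝ} (hx : x ∈ Set.Icc (0:ℝ) 1) : 0 ≤ fB b x := by
  refine Finset.sum_nonneg fun k _ => ?_
  have h1 : (0:ℝ) ≤ x := hx.1
  have h2 : (0:ℝ) ≤ 1 - x := by linarith [hx.2]
  positivity

lemma term_integrableOn (μ : Measure ℝ) [IsFiniteMeasure μ] (b k : ℕ) :
    IntegrableOn (fun x : ℝ => x ^ (k - 2) * (1 - x) ^ (b - k)) (Set.Icc (0:ℝ) 1) μ := by
  apply Continuous.integrableOn_Icc
  fun_prop

lemma lamB_eq_integral (μ : Measure ℝ) [IsFiniteMeasure μ] (b : ℕ) :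
    lamB μ b = ∫ x in Set.Icc (0:ℝ) 1, fB b x ∂μ := by
  unfold lamB lamBK fB
  rw [integral_finset_sum]
  · exact Finset.sum_congr rfl fun k _ => (integral_const_mul _ _).symm
  · exact fun k _ => (term_integrableOn μ b k).const_mul _

/-- Binomial identity: sum over `k ∈ [2,b]` of `C(b,k) x^k (1-x)^{b-k}`. -/
lemma sum_Icc_binom (b : ℕ) (hb : 2 ≤ b) (x : ℝ) :
    ∑ k ∈ Finset.Icc 2 b, (b.choose k : ℝ) * (x ^ k * (1 - x) ^ (b - k))
      = 1 - (1 - x) ^ b - b * x * (1 - x) ^ (b - 1) := by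
  have hfull : ∑ k ∈ Finset.range (b + 1), (b.choose k : ℝ) * (x ^ k * (1 - x) ^ (b - k)) = 1 := by
    have := add_pow x (1 - x) b
    simp only [add_sub_cancel, one_pow] at this
    calc ∑ k ∈ Finset.range (b + 1), (b.choose k : ℝ) * (x ^ k * (1 - x) ^ (b - k))
        = ∑ k ∈ Finset.range (b + 1), x ^ k * (1 - x) ^ (b - k) * (b.choose k : ℝ) :=
          Finset.sum_congr rfl fun k _ => by ring
      _ = 1 := this.symm
  have hset : Finset.Icc 2 b = Finset.range (b + 1) \ {0, 1} := by
    ext k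
    simp only [Finset.mem_Icc, Finset.mem_sdiff, Finset.mem_range, Finset.mem_insert,
      Finset.mem_singleton]
    omega
  rw [hset, Finset.sum_sdiff_eq_sub (by
    intro k hk
    simp only [Finset.mem_insert, Finset.mem_singleton] at hk
    simp only [Finset.mem_range]; omega), hfull]
  have : ∑ k ∈ ({0, 1} : Finset ℕ), (b.choose k : ℝ) * (x ^ k * (1 - x) ^ (b - k))
      = (1 - x) ^ b + b * x * (1 - x) ^ (b - 1) := by
    rw [Finset.sum_insert (by simp), Finset.sum_singleton]
    simp [Nat.choose_one_right]
    ring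
  rw [this]; ring

lemma sum_le_one {x : ℝ} (hx : x ∈ Set.Icc (0:ℝ) 1) (b : ℕ) :
    ∑ k ∈ Finset.Icc 2 b, (b.choose k : ℝ) * (x ^ k * (1 - x) ^ (b - k)) ≤ 1 := by
  have hfull : ∑ k ∈ Finset.range (b + 1), (b.choose k : ℝ) * (x ^ k * (1 - x) ^ (b - k)) = 1 := by
    have := add_pow x (1 - x) b
    simp only [add_sub_cancel, one_pow] at this
    calc ∑ k ∈ Finset.range (b + 1), (b.choose k : ℝ) * (x ^ k * (1 - x) ^ (b - k))
        = ∑ k ∈ Finset.range (b + 1), x ^ k * (1 - x) ^ (b - k) * (b.choose k : ℝ) :=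
          Finset.sum_congr rfl fun k _ => by ring
      _ = 1 := this.symm
  conv_rhs => rw [← hfull]
  apply Finset.sum_le_sum_of_subset_of_nonneg
  · intro k hk
    simp only [Finset.mem_Icc] at hk
    simp only [Finset.mem_range]; omega
  · intro k _ _
    have h1 : (0:ℝ) ≤ x := hx.1
    have h2 : (0:ℝ) ≤ 1 - x := by linarith [hx.2]
    positivity

lemma fB_le {a x : ℝ} (ha : 0 < a) (hx : x ∈ Set.Ioc a 1) (b : ℕ) :
    fB b x ≤ 1 / a ^ 2 := by
  have hx0 : (0:ℝ) ≤ x := (ha.trans hx.1).le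
  have hx1 : (0:ℝ) ≤ 1 - x := by linarith [hx.2]
  rw [le_div_iff₀ (by positivity), mul_comm]
  calc a ^ 2 * fB b x
      = ∑ k ∈ Finset.Icc 2 b, (b.choose k : ℝ) * (a ^ 2 * x ^ (k - 2) * (1 - x) ^ (b - k)) := by
        rw [fB, Finset.mul_sum]; exact Finset.sum_congr rfl fun k _ => by ring
    _ ≤ ∑ k ∈ Finset.Icc 2 b, (b.choose k : ℝ) * (x ^ k * (1 - x) ^ (b - k)) := by
        refine Finset.sum_le_sum fun k hk => ?_
        simp only [Finset.mem_Icc] at hk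
        have hxk : a ^ 2 * x ^ (k - 2) ≤ x ^ k := by
          have : x ^ k = x ^ 2 * x ^ (k - 2) := by
            rw [← pow_add]; congr 1; omega
          rw [this]
          have ha2 : a ^ 2 ≤ x ^ 2 := by nlinarith [hx.1]
          exact mul_le_mul_of_nonneg_right ha2 (by positivity)
        have := mul_le_mul_of_nonneg_right hxk (pow_nonneg hx1 (b - k))
        exact mul_le_mul_of_nonneg_left this (Nat.cast_nonneg _)
    _ ≤ 1 := sum_le_one ⟨hx0, hx.2⟩ b

lemma fB_ge {ε a x : ℝ} (hε : 0 < ε) (ha1 : a ≤ 1) (hx : x ∈ Set.Icc ε a)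
    {b : ℕ} (hb : 2 ≤ b) :
    1 - ((1 - ε) ^ b + b * (1 - ε) ^ (b - 1)) ≤ fB b x := by
  have hx0 : (0:ℝ) ≤ x := hε.le.trans hx.1
  have hx1 : x ≤ 1 := hx.2.trans ha1
  have hx1' : (0:ℝ) ≤ 1 - x := by linarith
  have h1 : ∑ k ∈ Finset.Icc 2 b, (b.choose k : ℝ) * (x ^ k * (1 - x) ^ (b - k)) ≤ fB b x := by
    refine Finset.sum_le_sum fun k hk => ?_
    refine mul_le_mul_of_nonneg_left ?_ (Nat.cast_nonneg _)
    exact mul_le_mul_of_nonneg_right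
      (pow_le_pow_of_le_one hx0 hx1 (by omega)) (pow_nonneg hx1' _)
  rw [sum_Icc_binom b hb x] at h1
  have h2 : (1 - x) ^ b ≤ (1 - ε) ^ b :=
    pow_le_pow_left₀ hx1' (by linarith [hx.1]) b
  have h3 : (b:ℝ) * x * (1 - x) ^ (b - 1) ≤ (b:ℝ) * (1 - ε) ^ (b - 1) := by
    have h4 : (1 - x) ^ (b - 1) ≤ (1 - ε) ^ (b - 1) :=
      pow_le_pow_left₀ hx1' (by linarith [hx.1]) _
    have h5 : x * (1 - x) ^ (b - 1) ≤ (1 - ε) ^ (b - 1) := by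
      calc x * (1 - x) ^ (b - 1) ≤ 1 * (1 - x) ^ (b - 1) :=
            mul_le_mul_of_nonneg_right hx1 (pow_nonneg hx1' _)
        _ = (1 - x) ^ (b - 1) := one_mul _
        _ ≤ (1 - ε) ^ (b - 1) := h4
    calc (b:ℝ) * x * (1 - x) ^ (b - 1) = (b:ℝ) * (x * (1 - x) ^ (b - 1)) := by ring
      _ ≤ (b:ℝ) * (1 - ε) ^ (b - 1) := mul_le_mul_of_nonneg_left h5 (Nat.cast_nonneg _)
  linarith

lemma tendsto_delta {r : ℝ} (h0 : 0 < r) (h1 : r < 1) :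
    Tendsto (fun b : ℕ => r ^ b + b * r ^ (b - 1)) atTop (nhds 0) := by
  have ha : Tendsto (fun b : ℕ => r ^ b) atTop (nhds 0) :=
    tendsto_pow_atTop_nhds_zero_of_lt_one h0.le h1
  have hb : Tendsto (fun b : ℕ => (b : ℝ) * r ^ b / r) atTop (nhds 0) := by
    simpa using (tendsto_self_mul_const_pow_of_lt_one h0.le h1).div_const r
  have hb' : Tendsto (fun b : ℕ => (b : ℝ) * r ^ (b - 1)) atTop (nhds 0) := by
    refine hb.congr' ?_
    filter_upwards [eventually_ge_atTop 1] with b hb1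
    have : r ^ b = r ^ (b - 1) * r := by rw [← pow_succ]; congr 1; omega
    rw [this]
    field_simp
  simpa using ha.add hb'


theorem lamB_restrict_comparable (μ : Measure ℝ) [IsFiniteMeasure μ]
    (h0 : μ {0} = 0) (h1 : μ {1} = 0)
    (hsupp : μ ((Set.Icc (0:ℝ) 1)ᶜ) = 0) (hpos : 0 < μ (Set.Icc (0:ℝ) 1))
    (a : ℝ) (ha : a ∈ Set.Ioo (0:ℝ) 1) (haΛ : 0 < μ (Set.Ioc 0 a)) :
    ∃ C₁ : ℝ, 0 < C₁ ∧ ∃ b₀ : ℕ, ∀ b : ℕ, b₀ ≤ b →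
      lamB (μ.restrict (Set.Icc 0 a)) b ≤ lamB μ b ∧
        lamB μ b ≤ C₁ * lamB (μ.restrict (Set.Icc 0 a)) b := by
  obtain ⟨ha0, ha1⟩ := ha
  -- choose ε with positive mass on (ε, a]
  have hex : ∃ n : ℕ, 0 < μ (Set.Ioc (a / (n + 2)) a) := by
    by_contra h
    push_neg at h
    have hz : ∀ n : ℕ, μ (Set.Ioc (a / ((n:ℝ) + 2)) a) = 0 :=
      fun n => le_antisymm (h n) zero_le
    have hsub : Set.Ioc (0:ℝ) a ⊆ ⋃ n : ℕ, Set.Ioc (a / ((n:ℝ) + 2)) a := by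
      intro x hx
      obtain ⟨n, hn⟩ := exists_nat_gt (a / x)
      refine Set.mem_iUnion.2 ⟨n, ?_, hx.2⟩
      have hx0 : 0 < x := hx.1
      rw [div_lt_iff₀ (by positivity)] at hn ⊢
      nlinarith
    have hμ0 : μ (Set.Ioc 0 a) = 0 :=
      le_antisymm ((measure_mono hsub).trans (measure_iUnion_null hz).le) zero_le
    exact absurd hμ0 haΛ.ne'
  obtain ⟨n, hn⟩ := hex
  set ε : ℝ := a / ((n:ℝ) + 2) with hεdef
  have hε0 : 0 < ε := by positivity
  have hεa : ε < a := by
    rw [hεdef]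
    apply div_lt_self ha0
    have : (0:ℝ) ≤ (n:ℝ) := Nat.cast_nonneg n
    linarith
  set c : ℝ := (μ (Set.Ioc ε a)).toReal with hcdef
  have hc : 0 < c := ENNReal.toReal_pos hn.ne' (measure_ne_top μ _)
  set M : ℝ := (1 / a ^ 2) * (μ (Set.Icc (0:ℝ) 1)).toReal with hMdef
  have hM : 0 ≤ M := by positivity
  have hr0 : (0:ℝ) < 1 - ε := by linarith
  have hr1 : 1 - ε < 1 := by linarith
  have hev : ∀ᶠ b : ℕ in atTop, (1 - ε) ^ b + b * (1 - ε) ^ (b - 1) < 1 / 2 :=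
    (tendsto_delta hr0 hr1).eventually_lt_const (by norm_num)
  obtain ⟨b₁, hb₁⟩ := eventually_atTop.1 hev
  set D : ℝ := 2 * M / c with hDdef
  have hD : 0 ≤ D := by positivity
  have hDc : D * (c / 2) = M := by rw [hDdef]; field_simp
  refine ⟨1 + D, by linarith, max b₁ 2, fun b hb => ?_⟩
  have hb2 : 2 ≤ b := le_trans (le_max_right _ _) hb
  have hbb₁ : b₁ ≤ b := le_trans (le_max_left _ _) hb
  -- integrability facts
  have hfBcont : Continuous (fB b) := by
    apply continuous_finset_sum
    intro k _
    fun_prop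
  have hint1 : IntegrableOn (fB b) (Set.Icc 0 1) μ := hfBcont.integrableOn_Icc
  have hintIcc0a : IntegrableOn (fB b) (Set.Icc 0 a) μ :=
    hint1.mono_set (Set.Icc_subset_Icc le_rfl ha1.le)
  have hintIoc : IntegrableOn (fB b) (Set.Ioc a 1) μ :=
    hint1.mono_set fun x hx => ⟨(ha0.trans hx.1).le, hx.2⟩
  have hintIocε : IntegrableOn (fB b) (Set.Ioc ε a) μ :=
    hint1.mono_set fun x hx => ⟨(hε0.trans hx.1).le, hx.2.trans ha1.le⟩
  -- the restricted lamB as an integral over [0,a]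
  have hrestr : lamB (μ.restrict (Set.Icc 0 a)) b = ∫ x in Set.Icc 0 a, fB b x ∂μ := by
    rw [lamB_eq_integral, Measure.restrict_restrict measurableSet_Icc, Set.Icc_inter_Icc]
    simp [min_eq_right ha1.le]
  -- nonnegativity a.e.
  have hnn1 : 0 ≤ᵐ[μ.restrict (Set.Icc (0:ℝ) 1)] fB b :=
    (ae_restrict_iff' measurableSet_Icc).2 (ae_of_all _ fun x hx => fB_nonneg b hx)
  have hnn0a : 0 ≤ᵐ[μ.restrict (Set.Icc (0:ℝ) a)] fB b :=
    (ae_restrict_iff' measurableSet_Icc).2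
      (ae_of_all _ fun x hx => fB_nonneg b ⟨hx.1, hx.2.trans ha1.le⟩)
  -- first inequality
  have hle1 : lamB (μ.restrict (Set.Icc 0 a)) b ≤ lamB μ b := by
    rw [hrestr, lamB_eq_integral]
    exact setIntegral_mono_set hint1 hnn1
      ((Set.Icc_subset_Icc le_rfl ha1.le).eventuallyLE)
  refine ⟨hle1, ?_⟩
  -- split the integral
  have hd : Disjoint (Set.Icc (0:ℝ) a) (Set.Ioc a 1) := by
    rw [Set.disjoint_left]
    intro x hx1 hx2
    exact absurd hx1.2 (not_le.2 hx2.1)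
  have hsplit : ∫ x in Set.Icc (0:ℝ) 1, fB b x ∂μ =
      (∫ x in Set.Icc 0 a, fB b x ∂μ) + ∫ x in Set.Ioc a 1, fB b x ∂μ := by
    rw [← Set.Icc_union_Ioc_eq_Icc ha0.le ha1.le,
      setIntegral_union hd measurableSet_Ioc hintIcc0a hintIoc]
  -- upper bound on the tail
  have hub : ∫ x in Set.Ioc a 1, fB b x ∂μ ≤ M := by
    calc ∫ x in Set.Ioc a 1, fB b x ∂μ
        ≤ ∫ _x in Set.Ioc a 1, (1 / a ^ 2) ∂μ := by
          refine setIntegral_mono_on hintIoc (integrableOn_const ?_)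
            measurableSet_Ioc fun x hx => fB_le ha0 hx b
          exact (measure_lt_top μ _).ne
      _ = (μ (Set.Ioc a 1)).toReal * (1 / a ^ 2) := by rw [setIntegral_const, smul_eq_mul]; rfl
      _ ≤ M := by
          have hμle : (μ (Set.Ioc a 1)).toReal ≤ (μ (Set.Icc (0:ℝ) 1)).toReal :=
            ENNReal.toReal_mono (measure_ne_top μ _)
              (measure_mono fun x hx => ⟨(ha0.trans hx.1).le, hx.2⟩)
          have h2 : (0:ℝ) ≤ 1 / a ^ 2 := by positivity
          rw [hMdef]
          nlinarith
  -- lower bound on [0,a] part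
  have hlb : c / 2 ≤ ∫ x in Set.Icc (0:ℝ) a, fB b x ∂μ := by
    have hss : Set.Ioc ε a ⊆ Set.Icc (0:ℝ) a :=
      fun x hx => ⟨(hε0.trans hx.1).le, hx.2⟩
    have hmono : ∫ x in Set.Ioc ε a, fB b x ∂μ ≤ ∫ x in Set.Icc (0:ℝ) a, fB b x ∂μ :=
      setIntegral_mono_set hintIcc0a hnn0a hss.eventuallyLE
    have hconst : ∫ _x in Set.Ioc ε a, (1/2 : ℝ) ∂μ ≤ ∫ x in Set.Ioc ε a, fB b x ∂μ := by
      refine setIntegral_mono_on (integrableOn_const (measure_lt_top μ _).ne)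
        hintIocε measurableSet_Ioc fun x hx => ?_
      have hδ := hb₁ b hbb₁
      have := fB_ge hε0 ha1.le ⟨hx.1.le, hx.2⟩ hb2
      linarith
    have : ∫ _x in Set.Ioc ε a, (1/2 : ℝ) ∂μ = c / 2 := by
      rw [setIntegral_const, smul_eq_mul, hcdef, Measure.real]
      ring
    linarith
  -- conclude
  rw [lamB_eq_integral, hsplit, hrestr]
  have hDL : D * (c / 2) ≤ D * (∫ x in Set.Icc (0:ℝ) a, fB b x ∂μ) :=
    mul_le_mul_of_nonneg_left hlb hD
  rw [hDc] at hDL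
  have hexp : (1 + D) * (∫ x in Set.Icc (0:ℝ) a, fB b x ∂μ) =
      (∫ x in Set.Icc (0:ℝ) a, fB b x ∂μ) + D * (∫ x in Set.Icc (0:ℝ) a, fB b x ∂μ) := by
    ring
  rw [hexp]
  linarith
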